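/- Let n, k, b be integers with 1 ≤ k-1 ≤ b ≤ n. Then the number of vertices of G_{n,k,b} satisfies |V_{n,k,b}| = (n-b+1)·C(b,k-1) + C(b,k) = (n+1)·C(b,k-1) - (k-1)·C(b+1,k), where C(m,j) denotes the binomial coefficient. -/

import Mathlib

/-- The maximum element of a finite set of naturals (`0` for the empty set). -/
def fmax (X : Finset ℕ) : ℕ := WithBot.unbotD 0 X.max

/-- The minimum element of a finite set of naturals (`0` for the empty set). -/
def fmin (X : Finset ℕ) : ℕ := WithTop.untopD 0 X.min

lemma fmin_eq {X : Finset ℕ} (h : X.Nonempty) : fmin X = X.min' h := by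
  unfold fmin
  rw [← Finset.coe_min' h, WithTop.untopD_coe]

lemma fmax_eq {X : Finset ℕ} (h : X.Nonempty) : fmax X = X.max' h := by
  unfold fmax
  rw [← Finset.coe_max' h, WithBot.unbotD_coe]

lemma fmin_mem {X : Finset ℕ} (h : X.Nonempty) : fmin X ∈ X := by
  rw [fmin_eq h]; exact X.min'_mem h

lemma fmax_mem {X : Finset ℕ} (h : X.Nonempty) : fmax X ∈ X := by
  rw [fmax_eq h]; exact X.max'_mem h

lemma fmin_le {X : Finset ℕ} {x : ℕ} (hx : x ∈ X) : fmin X ≤ x := by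
  rw [fmin_eq ⟨x, hx⟩]; exact Finset.min'_le X x hx

lemma le_fmax {X : Finset ℕ} {x : ℕ} (hx : x ∈ X) : x ≤ fmax X := by
  rw [fmax_eq ⟨x, hx⟩]; exact Finset.le_max' X x hx


/-- The vertex set `V_{n,k,b}`: all `k`-element subsets `X` of `{0,…,n}`
with `max X - min X ≤ b`. -/
def Vnkb (n k b : ℕ) : Finset (Finset ℕ) :=
  ((Finset.range (n + 1)).powersetCard k).filter (fun X => fmax X - fmin X ≤ b)

/-- The graph `G_{n,k,b}`: two distinct vertices `X, Y` are adjacent iff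
`max (X ∪ Y) - min (X ∪ Y) ≤ b`. -/
def Gnkb (n k b : ℕ) : SimpleGraph (Vnkb n k b) where
  Adj X Y := X ≠ Y ∧ fmax (X.1 ∪ Y.1) - fmin (X.1 ∪ Y.1) ≤ b
  symm := by
    refine ⟨?_⟩
    rintro X Y ⟨h1, h2⟩
    exact ⟨h1.symm, by rwa [Finset.union_comm]⟩
  loopless := by refine ⟨?_⟩; rintro X ⟨h1, -⟩; exact h1 rfl

/-- The bandwidth of a finite graph: the minimum over all bijective labellings of the
vertices by `{0, …, |V|-1}` (equivalently `{1, …, |V|}`) of the maximal absolute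
label difference along an edge. -/
noncomputable def bandwidth {V : Type*} [Fintype V] (G : SimpleGraph V) : ℕ :=
  sInf {m : ℕ | ∃ f : V ≃ Fin (Fintype.card V),
    ∀ u v : V, G.Adj u v → (((f u : ℕ) : ℤ) - ((f v : ℕ) : ℤ)).natAbs ≤ m}

lemma fiber_card (n k b m : ℕ) (hk : 2 ≤ k) (hm : m ≤ n) :
    ((Vnkb n k b).filter (fun X => fmin X = m)).card
      = Nat.choose (min b (n - m)) (k - 1) := by
  have key : ((Vnkb n k b).filter (fun X => fmin X = m)).card
      = ((Finset.Ioc m (m + min b (n - m))).powersetCard (k - 1)).card := by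
    refine Finset.card_bij' (fun X _ => X.erase m) (fun S _ => insert m S) ?_ ?_ ?_ ?_
    · -- forward membership
      intro X hX
      simp only [Vnkb, Finset.mem_filter, Finset.mem_powersetCard] at hX
      obtain ⟨⟨⟨hsub, hcard⟩, hband⟩, hmin⟩ := hX
      have hne : X.Nonempty := Finset.card_pos.mp (by omega)
      have hmX : m ∈ X := hmin ▸ fmin_mem hne
      rw [Finset.mem_powersetCard]
      constructor
      · intro x hx
        rw [Finset.mem_erase] at hx
        obtain ⟨hxm, hxX⟩ := hx
        have h1 : m ≤ x := hmin ▸ fmin_le hxX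
        have h2 : x ≤ n := by
          have := hsub hxX
          rw [Finset.mem_range] at this; omega
        have h3 : x ≤ fmax X := le_fmax hxX
        rw [Finset.mem_Ioc]
        constructor
        · omega
        · have : fmax X - m ≤ b := hmin ▸ hband
          omega
      · rw [Finset.card_erase_of_mem hmX, hcard]
    · -- backward membership
      intro S hS
      rw [Finset.mem_powersetCard] at hS
      obtain ⟨hsub, hcard⟩ := hS
      have hmS : m ∉ S := by
        intro h
        have := hsub h
        rw [Finset.mem_Ioc] at this; omega
      have hfm : fmin (insert m S) = m := by
        apply le_antisymm (fmin_le (Finset.mem_insert_self m S))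
        have := fmin_mem (X := insert m S) ⟨m, Finset.mem_insert_self m S⟩
        rw [Finset.mem_insert] at this
        rcases this with h | h
        · omega
        · have := hsub h
          rw [Finset.mem_Ioc] at this; omega
      simp only [Vnkb, Finset.mem_filter, Finset.mem_powersetCard]
      refine ⟨⟨⟨?_, ?_⟩, ?_⟩, hfm⟩
      · intro x hx
        rw [Finset.mem_insert] at hx
        rw [Finset.mem_range]
        rcases hx with rfl | hx
        · omega
        · have := hsub hx
          rw [Finset.mem_Ioc] at this; omega
      · rw [Finset.card_insert_of_notMem hmS, hcard]; omega
      · rw [hfm]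
        have hfmx := fmax_mem (X := insert m S) ⟨m, Finset.mem_insert_self m S⟩
        rw [Finset.mem_insert] at hfmx
        rcases hfmx with h | h
        · omega
        · have := hsub h
          rw [Finset.mem_Ioc] at this; omega
    · -- left inverse
      intro X hX
      simp only [Vnkb, Finset.mem_filter, Finset.mem_powersetCard] at hX
      obtain ⟨⟨⟨hsub, hcard⟩, hband⟩, hmin⟩ := hX
      have hne : X.Nonempty := Finset.card_pos.mp (by omega)
      exact Finset.insert_erase (hmin ▸ fmin_mem hne)
    · -- right inverse
      intro S hS
      rw [Finset.mem_powersetCard] at hS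
      apply Finset.erase_insert
      intro h
      have := hS.1 h
      rw [Finset.mem_Ioc] at this; omega
  rw [key, Finset.card_powersetCard, Nat.card_Ioc]
  congr 1
  omega


/-- The number of vertices of `G_{n,k,b}`:
`|V_{n,k,b}| = (n-b+1)·C(b,k-1) + C(b,k) = (n+1)·C(b,k-1) - (k-1)·C(b+1,k)`. -/
theorem card_Vnkb (n k b : ℕ) (h1 : 1 ≤ k - 1) (h2 : k - 1 ≤ b) (h3 : b ≤ n) :
    (Vnkb n k b).card = (n - b + 1) * Nat.choose b (k - 1) + Nat.choose b k ∧
    ((Vnkb n k b).card : ℤ) =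
      ((n : ℤ) + 1) * Nat.choose b (k - 1) - ((k : ℤ) - 1) * Nat.choose (b + 1) k := by
  have hk : 2 ≤ k := by omega
  have main : (Vnkb n k b).card = (n - b + 1) * Nat.choose b (k - 1) + Nat.choose b k := by
    have hfib : (Vnkb n k b).card
        = ∑ m ∈ Finset.range (n + 1), ((Vnkb n k b).filter (fun X => fmin X = m)).card := by
      apply Finset.card_eq_sum_card_fiberwise
      intro X hX
      simp only [Finset.mem_coe, Vnkb, Finset.mem_filter, Finset.mem_powersetCard] at hX
      have hne : X.Nonempty := Finset.card_pos.mp (by omega)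
      exact hX.1.1 (fmin_mem hne)
    rw [hfib]
    have hsum : ∑ m ∈ Finset.range (n + 1), ((Vnkb n k b).filter (fun X => fmin X = m)).card
        = ∑ m ∈ Finset.range (n + 1), Nat.choose (min b (n - m)) (k - 1) := by
      apply Finset.sum_congr rfl
      intro m hm
      rw [Finset.mem_range] at hm
      exact fiber_card n k b m hk (by omega)
    rw [hsum]
    have hrefl : ∑ m ∈ Finset.range (n + 1), Nat.choose (min b (n - m)) (k - 1)
        = ∑ j ∈ Finset.range (n + 1), Nat.choose (min b j) (k - 1) := by
      have := Finset.sum_range_reflect (fun j => Nat.choose (min b j) (k - 1)) (n + 1)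
      simp only [Nat.add_sub_cancel] at this
      exact this
    rw [hrefl]
    rw [Finset.range_eq_Ico, ← Finset.sum_Ico_consecutive _ (Nat.zero_le b) (by omega : b ≤ n + 1)]
    have e1 : ∑ j ∈ Finset.Ico 0 b, Nat.choose (min b j) (k - 1) = Nat.choose b k := by
      rw [← Finset.range_eq_Ico]
      have : ∀ j ∈ Finset.range b, Nat.choose (min b j) (k - 1) = Nat.choose j (k - 1) := by
        intro j hj
        rw [Finset.mem_range] at hj
        rw [min_eq_right (by omega)]
      rw [Finset.sum_congr rfl this]
      -- hockey stick
      have hzero : ∀ j ∈ Finset.range b \ Finset.Icc (k - 1) (b - 1),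
          Nat.choose j (k - 1) = 0 := by
        intro j hj
        simp only [Finset.mem_sdiff, Finset.mem_range, Finset.mem_Icc] at hj
        exact Nat.choose_eq_zero_of_lt (by omega)
      have hsubset : Finset.Icc (k - 1) (b - 1) ⊆ Finset.range b := by
        intro j hj
        simp only [Finset.mem_Icc] at hj
        rw [Finset.mem_range]; omega
      rw [← Finset.sum_subset hsubset (fun j h1' h2' =>
        hzero j (Finset.mem_sdiff.mpr ⟨h1', h2'⟩))]
      rw [Nat.sum_Icc_choose]
      congr 1 <;> omega
    have e2 : ∑ j ∈ Finset.Ico b (n + 1), Nat.choose (min b j) (k - 1)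
        = (n - b + 1) * Nat.choose b (k - 1) := by
      have : ∀ j ∈ Finset.Ico b (n + 1), Nat.choose (min b j) (k - 1)
          = Nat.choose b (k - 1) := by
        intro j hj
        rw [Finset.mem_Ico] at hj
        rw [min_eq_left (by omega)]
      rw [Finset.sum_congr rfl this, Finset.sum_const, Nat.card_Ico, smul_eq_mul]
      congr 1; omega
    rw [e1, e2]; omega
  refine ⟨main, ?_⟩
  rw [main]
  have pascal : Nat.choose (b + 1) k = Nat.choose b (k - 1) + Nat.choose b k := by
    have := Nat.choose_succ_succ' b (k - 1)
    rw [show k - 1 + 1 = k by omega] at this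
    rw [this]
  have habs : (b + 1) * Nat.choose b (k - 1) = Nat.choose (b + 1) k * k := by
    have := Nat.add_one_mul_choose_eq b (k - 1)
    rw [show k - 1 + 1 = k by omega] at this
    exact this
  have hb : (n - b : ℕ) = (n : ℤ) - b := by omega
  push_cast [pascal]
  rw [hb]
  have habs' : ((b : ℤ) + 1) * Nat.choose b (k - 1)
      = ((Nat.choose b (k - 1) : ℤ) + Nat.choose b k) * k := by
    have := habs
    rw [pascal] at this
    exact_mod_cast this
  have hk1 : (1 : ℤ) ≤ (k : ℤ) - 1 := by push_cast; omega
  push_cast at habs'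
  ring_nf
  ring_nf at habs'
  linarith
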